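/- (Optimality criterion, Proposition 1.2.3 of Bertsekas.) A stationary deterministic policy μ is optimal, i.e., J_μ = J*, if and only if T_μ J* = T J*, i.e., μ(x) attains the minimum in Bellman's equation (T J*)(x) = min_{a ∈ A} [g x a + α ∑_{y∈S} P x a y · J*(y)] for every x ∈ S. -/

import Mathlib

/-- The Bellman operator `T` of the finite discounted MDP. -/
noncomputable def Tbell {S A : Type*} [Fintype S] [Fintype A] [Nonempty A]
    (P : S → A → S → ℝ) (g : S → A → ℝ) (α : ℝ) (J : S → ℝ) : S → ℝ :=
  fun x => Finset.univ.inf' Finset.univ_nonempty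
    (fun a : A => g x a + α * ∑ y, P x a y * J y)

/-- The one-stage DP operator `T_μ` for a stationary deterministic policy `μ`. -/
noncomputable def Tpol {S A : Type*} [Fintype S]
    (P : S → A → S → ℝ) (g : S → A → ℝ) (α : ℝ) (μ : S → A) (J : S → ℝ) : S → ℝ :=
  fun x => g x (μ x) + α * ∑ y, P x (μ x) y * J y

/-- The transition matrix `P_μ` of a stationary deterministic policy `μ`. -/
def Pmat {S A : Type*} (P : S → A → S → ℝ) (μ : S → A) : Matrix S S ℝ :=
  fun x y => P x (μ x) y

/-- The stage-cost vector `g_μ` of a stationary deterministic policy `μ`. -/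
def gvec {S A : Type*} (g : S → A → ℝ) (μ : S → A) : S → ℝ :=
  fun x => g x (μ x)

/-- The value function `J_μ(x) = ∑_{t} α^t (P_μ^t g_μ)(x)` of policy `μ`. -/
noncomputable def Jval {S A : Type*} [Fintype S] [DecidableEq S]
    (P : S → A → S → ℝ) (g : S → A → ℝ) (α : ℝ) (μ : S → A) : S → ℝ :=
  fun x => ∑' t : ℕ, α ^ t * ((Pmat P μ ^ t).mulVec (gvec g μ)) x

section Aux

variable {S A : Type*} [Fintype S] [Nonempty S] [DecidableEq S]
  (P : S → A → S → ℝ) (g : S → A → ℝ) (α : ℝ) (μ : S → A)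

lemma pmat_bound (hP0 : ∀ x a y, 0 ≤ P x a y) (hP1 : ∀ x a, ∑ y, P x a y = 1)
    (C : ℝ) (hC : ∀ x, |gvec g μ x| ≤ C) :
    ∀ t x, |((Pmat P μ ^ t).mulVec (gvec g μ)) x| ≤ C := by
  intro t
  induction t with
  | zero => intro x; simpa [Matrix.one_mulVec] using hC x
  | succ t ih =>
    intro x
    have : (Pmat P μ ^ (t+1)).mulVec (gvec g μ) x
        = ∑ y, Pmat P μ x y * ((Pmat P μ ^ t).mulVec (gvec g μ)) y := by
      rw [pow_succ']
      simp [Matrix.mulVec, dotProduct, Matrix.mul_apply, Finset.sum_mul,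
        Finset.mul_sum, mul_assoc]
      rw [Finset.sum_comm]
    rw [this]
    calc |∑ y, Pmat P μ x y * ((Pmat P μ ^ t).mulVec (gvec g μ)) y|
        ≤ ∑ y, |Pmat P μ x y * ((Pmat P μ ^ t).mulVec (gvec g μ)) y| :=
          Finset.abs_sum_le_sum_abs _ _
      _ ≤ ∑ y, Pmat P μ x y * C := by
          apply Finset.sum_le_sum
          intro y _
          rw [abs_mul, abs_of_nonneg (show (0:ℝ) ≤ Pmat P μ x y from hP0 x (μ x) y)]
          exact mul_le_mul_of_nonneg_left (ih y) (hP0 x (μ x) y)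
      _ = C := by
          rw [← Finset.sum_mul, show ∑ y, Pmat P μ x y = 1 from hP1 x (μ x), one_mul]

lemma summable_jval (hP0 : ∀ x a y, 0 ≤ P x a y) (hP1 : ∀ x a, ∑ y, P x a y = 1)
    (hα0 : 0 < α) (hα1 : α < 1) (x : S) :
    Summable (fun t : ℕ => α ^ t * ((Pmat P μ ^ t).mulVec (gvec g μ)) x) := by
  obtain ⟨C, hC⟩ : ∃ C, ∀ x, |gvec g μ x| ≤ C :=
    ⟨Finset.univ.sup' Finset.univ_nonempty (fun x => |gvec g μ x|),
      fun x => Finset.le_sup' (fun x => |gvec g μ x|) (Finset.mem_univ x)⟩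
  apply Summable.of_norm_bounded (g := fun t => C * α ^ t)
    ((summable_geometric_of_lt_one hα0.le hα1).mul_left C)
  intro t
  rw [Real.norm_eq_abs, abs_mul, abs_of_nonneg (pow_nonneg hα0.le t), mul_comm]
  exact mul_le_mul_of_nonneg_right (pmat_bound P g μ hP0 hP1 C hC t x) (pow_nonneg hα0.le t)

lemma jval_fixed (hP0 : ∀ x a y, 0 ≤ P x a y) (hP1 : ∀ x a, ∑ y, P x a y = 1)
    (hα0 : 0 < α) (hα1 : α < 1) :
    Tpol P g α μ (Jval P g α μ) = Jval P g α μ := by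
  funext x
  have hsum := fun y => summable_jval P g α μ hP0 hP1 hα0 hα1 y
  have key : ∑ y, P x (μ x) y * Jval P g α μ y
      = ∑' t : ℕ, α ^ t * ((Pmat P μ ^ (t+1)).mulVec (gvec g μ)) x := by
    have h1 : ∀ y : S, P x (μ x) y * Jval P g α μ y
        = ∑' t : ℕ, P x (μ x) y * (α ^ t * ((Pmat P μ ^ t).mulVec (gvec g μ)) y) := by
      intro y; rw [Jval, tsum_mul_left]
    rw [Finset.sum_congr rfl (fun y _ => h1 y),
      ← Summable.tsum_finsetSum (fun y _ => (hsum y).mul_left _)]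
    congr 1
    funext t
    have : (Pmat P μ ^ (t+1)).mulVec (gvec g μ) x
        = ∑ y, Pmat P μ x y * ((Pmat P μ ^ t).mulVec (gvec g μ)) y := by
      rw [pow_succ']
      simp [Matrix.mulVec, dotProduct, Matrix.mul_apply, Finset.sum_mul,
        Finset.mul_sum, mul_assoc]
      rw [Finset.sum_comm]
    rw [this, Finset.mul_sum]
    congr 1; funext y; unfold Pmat; ring
  have shift : Jval P g α μ x
      = α ^ 0 * ((Pmat P μ ^ 0).mulVec (gvec g μ)) x
        + ∑' t : ℕ, α ^ (t+1) * ((Pmat P μ ^ (t+1)).mulVec (gvec g μ)) x := by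
    rw [Jval]
    exact Summable.tsum_eq_zero_add (summable_jval P g α μ hP0 hP1 hα0 hα1 x)
  rw [Tpol, key]
  rw [shift]
  simp only [pow_zero, pow_succ, one_mul, Matrix.one_mulVec]
  rw [← tsum_mul_left]
  exact congrArg₂ (· + ·) rfl (tsum_congr fun t => by ring)

lemma fixed_unique (hP0 : ∀ x a y, 0 ≤ P x a y) (hP1 : ∀ x a, ∑ y, P x a y = 1)
    (hα0 : 0 < α) (hα1 : α < 1) (J K : S → ℝ)
    (hJ : Tpol P g α μ J = J) (hK : Tpol P g α μ K = K) : J = K := by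
  set M := Finset.univ.sup' Finset.univ_nonempty (fun x => |J x - K x|) with hM
  have hMge : ∀ x, |J x - K x| ≤ M :=
    fun x => Finset.le_sup' (fun x => |J x - K x|) (Finset.mem_univ x)
  have hbd : ∀ x, |J x - K x| ≤ α * M := by
    intro x
    have hJx := congrFun hJ x
    have hKx := congrFun hK x
    rw [Tpol] at hJx hKx
    have : J x - K x = α * ∑ y, P x (μ x) y * (J y - K y) := by
      have h : ∑ y, P x (μ x) y * (J y - K y)
          = ∑ y, P x (μ x) y * J y - ∑ y, P x (μ x) y * K y := by
        rw [← Finset.sum_sub_distrib]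
        exact Finset.sum_congr rfl fun y _ => by ring
      rw [h]; linear_combination hKx - hJx
    rw [this, abs_mul, abs_of_nonneg hα0.le]
    apply mul_le_mul_of_nonneg_left _ hα0.le
    calc |∑ y, P x (μ x) y * (J y - K y)| ≤ ∑ y, |P x (μ x) y * (J y - K y)| :=
        Finset.abs_sum_le_sum_abs _ _
      _ ≤ ∑ y, P x (μ x) y * M := by
          apply Finset.sum_le_sum; intro y _
          rw [abs_mul, abs_of_nonneg (hP0 x (μ x) y)]
          exact mul_le_mul_of_nonneg_left (hMge y) (hP0 x (μ x) y)
      _ = M := by rw [← Finset.sum_mul, hP1 x (μ x), one_mul]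
  have hMle : M ≤ α * M := by
    obtain ⟨x, -, hx⟩ := Finset.exists_mem_eq_sup' (Finset.univ_nonempty (α := S))
      (fun x => |J x - K x|)
    calc M = |J x - K x| := hM.trans hx
      _ ≤ α * M := hbd x
  have hM0 : M ≤ 0 := by nlinarith
  funext x
  have := (hMge x).trans hM0
  have := abs_nonneg (J x - K x)
  have : |J x - K x| = 0 := le_antisymm ‹|J x - K x| ≤ 0› (abs_nonneg _)
  linarith [abs_eq_zero.mp this, sub_eq_zero.mp (abs_eq_zero.mp this)]

end Aux

theorem stmt_11 {S A : Type*} [Fintype S] [Nonempty S] [DecidableEq S] [Fintype A] [Nonempty A]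
    (P : S → A → S → ℝ) (g : S → A → ℝ) (α : ℝ)
    (hP0 : ∀ x a y, 0 ≤ P x a y) (hP1 : ∀ x a, ∑ y, P x a y = 1)
    (hα0 : 0 < α) (hα1 : α < 1)
    (Jstar : S → ℝ) (hJstar : Tbell P g α Jstar = Jstar)
    (μ : S → A) :
    Jval P g α μ = Jstar ↔ Tpol P g α μ Jstar = Tbell P g α Jstar := by
  have hfix := jval_fixed P g α μ hP0 hP1 hα0 hα1
  constructor
  · intro h
    calc Tpol P g α μ Jstar = Tpol P g α μ (Jval P g α μ) := by rw [h]
      _ = Jval P g α μ := hfix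
      _ = Jstar := h
      _ = Tbell P g α Jstar := hJstar.symm
  · intro h
    exact fixed_unique P g α μ hP0 hP1 hα0 hα1 _ _ hfix (h.trans hJstar)
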